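/- Let (X,d,μ) be a space of homogeneous type, let K be an ω-Calderón–Zygmund kernel, and suppose (K, ξ, A, ε, B, B̃) is admissible with B = B(y₀,r), B̃ = B(x₀,r). Suppose T ∈ SIO(K, L^∞_bs(X)), T* ∈ SIO(K*, L^∞_bs(X)), c ≥ 1, and ε ≤ (2cξ²)⁻¹. Then for every f ∈ L^∞₀(B) and every g ∈ L^∞₊(B̃) with 0 < ‖g‖_∞ ≤ (c/μ(B̃)) ∫_{B̃} g dμ, there is a decomposition f = g·Th − h·T*g + f̃, where f̃ ∈ L^∞₀({x ∈ B̃ : g(x) ≠ 0}) and h ∈ L^∞({y ∈ B : f(y) ≠ 0}) satisfy ‖g‖_∞ ‖h‖_∞ ≲_{c,ξ} (μ(B(y₀,Ar))/μ(B̃)) ‖f‖_∞ and ‖f̃‖_∞ ≲_{c,ξ} ε (μ(B)/μ(B̃)) ‖f‖_∞. -/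

import Mathlib

open MeasureTheory Filter Set
open scoped ENNReal NNReal

noncomputable section

namespace SHT

variable {X : Type*}

/-- The quasi-metric ball `B(x,r)`. -/
def qball (d : X → X → ℝ) (x : X) (r : ℝ) : Set X := {y | d x y < r}

/-- Open sets for the topology induced by a quasi-metric. -/
def dOpen (d : X → X → ℝ) (U : Set X) : Prop := ∀ x ∈ U, ∃ r > 0, qball d x r ⊆ U

/-- Closure of a set in the topology induced by a quasi-metric. -/
def dClosure (d : X → X → ℝ) (A : Set X) : Set X :=
  {x | ∀ U : Set X, dOpen d U → x ∈ U → (U ∩ A).Nonempty}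

/-- Support of a function: the closure of its non-vanishing set. -/
def qsupp (d : X → X → ℝ) (f : X → ℂ) : Set X := dClosure d {y | f y ≠ 0}

/-- `(X, d, μ)` is a space of homogeneous type with quasi-metric constant `A₀`
and doubling constant `Cμ`. -/
structure IsSHT [MeasurableSpace X] (d : X → X → ℝ) (μ : Measure X) (A₀ Cμ : ℝ) : Prop where
  one_le_A0 : 1 ≤ A₀
  symm : ∀ x y, d x y = d y x
  nonneg : ∀ x y, 0 ≤ d x y
  eq_zero_iff : ∀ x y, d x y = 0 ↔ x = y
  triangle : ∀ x y z, d x y ≤ A₀ * (d x z + d z y)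
  meas_ball : ∀ (x : X) (r : ℝ), MeasurableSet (qball d x r)
  ball_pos : ∀ (x : X) (r : ℝ), 0 < r → 0 < μ (qball d x r)
  ball_ne_top : ∀ (x : X) (r : ℝ), μ (qball d x r) < ∞
  one_le_Cmu : 1 ≤ Cμ
  doubling : ∀ (x : X) (r : ℝ), 0 < r →
    μ (qball d x (2 * r)) ≤ ENNReal.ofReal Cμ * μ (qball d x r)
  measure_univ : μ Set.univ = ∞
  null_singleton : ∀ x : X, μ {x} = 0

/-- An `ω`-Calderón–Zygmund kernel with size constant `cK`. -/
structure IsCZKernel [MeasurableSpace X] (d : X → X → ℝ) (μ : Measure X) (A₀ : ℝ)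
    (K : X → X → ℂ) (cK : ℝ) (ω : ℝ → ℝ) : Prop where
  size : ∀ x y, x ≠ y →
    norm (K x y) ≤ cK / (μ (qball d x (d x y))).toReal
  regularity : ∀ x x' y, x ≠ y → d x x' < (2 * A₀)⁻¹ * d x y →
    norm (K x y - K x' y) + norm (K y x - K y x')
      ≤ ω (d x x' / d x y) / (μ (qball d x (d x y))).toReal
  omega_cont : ContinuousOn ω (Set.Icc 0 1)
  omega_mono : MonotoneOn ω (Set.Icc 0 1)
  omega_nonneg : ∀ t ∈ Set.Icc (0:ℝ) 1, 0 ≤ ω t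
  omega_subadd : ∀ s t : ℝ, 0 ≤ s → 0 ≤ t → s + t ≤ 1 → ω (s + t) ≤ ω s + ω t
  omega_zero : ω 0 = 0

/-- The Dini condition `∫₀¹ ω(t) dt/t < ∞`. -/
def DiniCondition (ω : ℝ → ℝ) : Prop :=
  MeasureTheory.IntegrableOn (fun t => ω t / t) (Set.Ioo (0:ℝ) 1) MeasureTheory.volume

/-- Non-degeneracy of the kernel: for every `x` and `r > 0` there is
`y ∈ B(x, C̄ r) \ B(x,r)` with `|K(x,y)| ≥ 1/(c₀ μ(B(x,r)))`. -/
def NonDeg [MeasurableSpace X] (d : X → X → ℝ) (μ : Measure X) (K : X → X → ℂ)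
    (c₀ Cb : ℝ) : Prop :=
  ∀ (x : X) (r : ℝ), 0 < r → ∃ y ∈ qball d x (Cb * r) \ qball d x r,
    1 / (c₀ * (μ (qball d x r)).toReal) ≤ norm (K x y)

/-- Dual non-degeneracy of the kernel: for every `y` and `r > 0` there is
`x ∈ B(y, C̄ r) \ B(y,r)` with `|K(x,y)| ≥ 1/(c₀ μ(B(y,r)))`. -/
def NonDegDual [MeasurableSpace X] (d : X → X → ℝ) (μ : Measure X) (K : X → X → ℂ)
    (c₀ Cb : ℝ) : Prop :=
  ∀ (y : X) (r : ℝ), 0 < r → ∃ x ∈ qball d y (Cb * r) \ qball d y r,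
    1 / (c₀ * (μ (qball d y r)).toReal) ≤ norm (K x y)

/-- `w(E) = ∫_E w dμ`. -/
def wInt [MeasurableSpace X] (μ : Measure X) (w : X → ℝ) (E : Set X) : ℝ := ∫ x in E, w x ∂μ

/-- `w` is a positive, locally (on balls) integrable weight. -/
def IsWeight [MeasurableSpace X] (d : X → X → ℝ) (μ : Measure X) (w : X → ℝ) : Prop :=
  Measurable w ∧ (∀ x, 0 < w x) ∧
    ∀ (x : X) (r : ℝ), 0 < r → IntegrableOn w (qball d x r) μ

/-- `C` is an upper bound for the Muckenhoupt `A_p` characteristic `[w]_{A_p}`. -/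
def IsApBound [MeasurableSpace X] (d : X → X → ℝ) (μ : Measure X) (p : ℝ) (w : X → ℝ)
    (C : ℝ) : Prop :=
  ∀ (x : X) (r : ℝ), 0 < r →
    (∫ z in qball d x r, w z ∂μ) *
      (∫ z in qball d x r, (w z) ^ (-(1 / (p - 1))) ∂μ) ^ (p - 1)
      ≤ C * ((μ (qball d x r)).toReal) ^ p

/-- Conjugate exponent `p' = p/(p-1)`. -/
def conjExp (p : ℝ) : ℝ := p / (p - 1)

/-- Average `⟨b⟩_E` of a (complex-valued) function over a set. -/
def cavg [MeasurableSpace X] (μ : Measure X) (b : X → ℂ) (E : Set X) : ℂ :=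
  ((μ E).toReal)⁻¹ • ∫ x in E, b x ∂μ

/-- Oscillation `∫_E |b - ⟨b⟩_E| dμ`. -/
def osc [MeasurableSpace X] (μ : Measure X) (b : X → ℂ) (E : Set X) : ℝ :=
  ∫ x in E, norm (b x - cavg μ b E) ∂μ

/-- `N` is an upper bound for the weighted fractional BMO norm `‖b‖_{BMO_w^α}`,
where `Qd` is the upper dimension of the measure. -/
def BMOBound [MeasurableSpace X] (d : X → X → ℝ) (μ : Measure X) (w : X → ℝ)
    (Qd α : ℝ) (b : X → ℂ) (N : ℝ) : Prop :=
  ∀ (x : X) (r : ℝ), 0 < r →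
    osc μ b (qball d x r)
      ≤ N * (wInt μ w (qball d x r)) ^ (α / Qd) * wInt μ w (qball d x r)

/-- Local integrability (integrability on all balls). -/
def LocInt [MeasurableSpace X] (d : X → X → ℝ) (μ : Measure X) (b : X → ℂ) : Prop :=
  Measurable b ∧ ∀ (x : X) (r : ℝ), 0 < r → IntegrableOn b (qball d x r) μ

/-- Bounded function. -/
def BddFun (f : X → ℂ) : Prop := ∃ M : ℝ, ∀ x, norm (f x) ≤ M

/-- Boundedly supported function. -/
def BddSupp (d : X → X → ℝ) (f : X → ℂ) : Prop :=
  ∃ (x : X) (r : ℝ), ∀ y, f y ≠ 0 → d x y < r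

/-- `L^∞_bs(X)`: bounded functions with bounded support. -/
def Linftybs (d : X → X → ℝ) : Set (X → ℂ) := {f | BddFun f ∧ BddSupp d f}

/-- `L¹_bs(X)`: integrable functions with bounded support. -/
def L1bs [MeasurableSpace X] (d : X → X → ℝ) (μ : Measure X) : Set (X → ℂ) :=
  {f | Integrable f μ ∧ BddSupp d f}

/-- `L^∞(E)`: bounded functions vanishing outside `E`. -/
def MemLinfty (f : X → ℂ) (E : Set X) : Prop := BddFun f ∧ ∀ x ∉ E, f x = 0

/-- `L^∞₀(E)`: bounded integrable functions vanishing outside `E` with mean zero. -/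
def MemLinfty0 [MeasurableSpace X] (μ : Measure X) (f : X → ℂ) (E : Set X) : Prop :=
  MemLinfty f E ∧ Integrable f μ ∧ (∫ x, f x ∂μ) = 0

/-- Supremum norm of a complex-valued function. -/
def supNorm (f : X → ℂ) : ℝ := ⨆ x, norm (f x)

/-- Supremum norm of a real-valued function. -/
def supNormR (g : X → ℝ) : ℝ := ⨆ x, |g x|

/-- `T ∈ SIO(K, 𝓕)`: on `𝓕`, `T` is represented by the kernel `K` off the support. -/
def SIO [MeasurableSpace X] (d : X → X → ℝ) (μ : Measure X) (K : X → X → ℂ)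
    (F : Set (X → ℂ)) (T : (X → ℂ) → X → ℂ) : Prop :=
  ∀ f ∈ F, ∀ x ∉ qsupp d f, T f x = ∫ y, K x y * f y ∂μ

/-- A Calderón–Zygmund operator: bounded on `L²` and represented by the kernel off
the support (for `f` in `L²` or in `L¹`). -/
structure IsCZO [MeasurableSpace X] (d : X → X → ℝ) (μ : Measure X) (K : X → X → ℂ)
    (T : (X → ℂ) → X → ℂ) : Prop where
  bddL2 : ∃ M : ℝ≥0∞, ∀ f : X → ℂ, MemLp f 2 μ →
    MemLp (T f) 2 μ ∧ eLpNorm (T f) 2 μ ≤ M * eLpNorm f 2 μ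
  repr : ∀ f : X → ℂ, (MemLp f 2 μ ∨ Integrable f μ) →
    ∀ x ∉ qsupp d f, T f x = ∫ y, K x y * f y ∂μ

/-- The commutator `[b,T]f = b · Tf − T(bf)`. -/
def commut (b : X → ℂ) (T : (X → ℂ) → X → ℂ) (f : X → ℂ) : X → ℂ :=
  fun x => b x * T f x - T (fun y => b y * f y) x

/-- Weighted `L^p` norm `‖f‖_{L^p_w} = (∫ |f w|^p dμ)^{1/p}` (valued in `ℝ≥0∞`). -/
def wLpNorm [MeasurableSpace X] (μ : Measure X) (p : ℝ) (w : X → ℝ) (f : X → ℂ) : ℝ≥0∞ :=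
  (∫⁻ x, ENNReal.ofReal (norm (f x) * w x) ^ p ∂μ) ^ (1 / p)

/-- Weighted `L^q` norm of an `ℝ≥0∞`-valued function. -/
def wLqNormE [MeasurableSpace X] (μ : Measure X) (q : ℝ) (w : X → ℝ) (g : X → ℝ≥0∞) : ℝ≥0∞ :=
  (∫⁻ x, (g x * ENNReal.ofReal (w x)) ^ q ∂μ) ^ (1 / q)

/-- A system of dyadic cubes on `X`. -/
structure DyadicSystem [MeasurableSpace X] (d : X → X → ℝ) where
  δ : ℝ
  a1 : ℝ
  A1 : ℝ
  δ_pos : 0 < δ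
  δ_lt_one : δ < 1
  a1_pos : 0 < a1
  a1_le_A1 : a1 ≤ A1
  cubes : ℤ → Set (Set X)
  countable : ∀ k, (cubes k).Countable
  meas : ∀ k, ∀ Q ∈ cubes k, MeasurableSet Q
  cover : ∀ k, ⋃₀ cubes k = Set.univ
  pdisj : ∀ k, (cubes k).PairwiseDisjoint id
  nested : ∀ k l : ℤ, k ≤ l → ∀ Q ∈ cubes k, ∀ R ∈ cubes l, R ⊆ Q ∨ Disjoint Q R
  center : ∀ k : ℤ, ∀ Q ∈ cubes k, ∃ x : X,
    qball d x (a1 * δ ^ k) ⊆ Q ∧ Q ⊆ qball d x (A1 * δ ^ k)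

/-- An `η`-sparse family of dyadic cubes. -/
structure SparseFamily [MeasurableSpace X] (d : X → X → ℝ) (μ : Measure X)
    (D : DyadicSystem d) (η : ℝ) where
  S : Set (Set X)
  mem_dyadic : ∀ Q ∈ S, ∃ k, Q ∈ D.cubes k
  E : Set X → Set X
  E_sub : ∀ Q ∈ S, E Q ⊆ Q
  E_meas : ∀ Q ∈ S, MeasurableSet (E Q)
  E_dense : ∀ Q ∈ S, ENNReal.ofReal η * μ Q ≤ μ (E Q)
  overlap : ∃ N : ℕ, ∀ x : X, ∀ F : Finset (Set X),
    (↑F : Set (Set X)) ⊆ S → (∀ Q ∈ F, x ∈ E Q) → F.card ≤ N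

/-- Average of `|f|` over `P` (valued in `ℝ≥0∞`). -/
def avgAbs [MeasurableSpace X] (μ : Measure X) (f : X → ℂ) (P : Set X) : ℝ≥0∞ :=
  (∫⁻ x in P, ENNReal.ofReal (norm (f x)) ∂μ) / μ P

/-- The coefficient `l₁^p(P)^{1/p} l₂^{-q'}(P)^{1/q'} / μ(P)` of the two-weight
fractional sparse operator. -/
def sparseCoef [MeasurableSpace X] (μ : Measure X) (p q : ℝ) (l₁ l₂ : X → ℝ)
    (P : Set X) : ℝ≥0∞ :=
  (∫⁻ x in P, ENNReal.ofReal ((l₁ x) ^ p) ∂μ) ^ (1 / p)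
    * (∫⁻ x in P, ENNReal.ofReal ((l₂ x) ^ (-(conjExp q))) ∂μ) ^ (1 / conjExp q) / μ P

/-- The two-weight fractional sparse operator `𝒜^{p,q}_{l₁,l₂}(f;𝒮)`. -/
def sparseOp [MeasurableSpace X] (μ : Measure X) (p q : ℝ) (l₁ l₂ : X → ℝ)
    (S : Set (Set X)) (f : X → ℂ) (x : X) : ℝ≥0∞ :=
  ∑' P : S, Set.indicator (P : Set X)
    (fun _ => sparseCoef μ p q l₁ l₂ (P : Set X) * avgAbs μ f (P : Set X)) x

/-- The sparse operator `𝒜_{b,𝒮} f(x) = Σ_{Q∈𝒮} |b(x) − ⟨b⟩_Q| ⟨|f|⟩_Q χ_Q(x)`. -/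
def Asparse [MeasurableSpace X] (μ : Measure X) (b : X → ℂ) (S : Set (Set X))
    (f : X → ℂ) (x : X) : ℝ≥0∞ :=
  ∑' P : S, Set.indicator (P : Set X)
    (fun z => ENNReal.ofReal (norm (b z - cavg μ b (P : Set X)))
      * avgAbs μ f (P : Set X)) x

/-- The sparse operator `𝒜*_{b,𝒮} f(x) = Σ_{Q∈𝒮} ⟨|b − ⟨b⟩_Q| |f|⟩_Q χ_Q(x)`. -/
def AsparseStar [MeasurableSpace X] (μ : Measure X) (b : X → ℂ) (S : Set (Set X))
    (f : X → ℂ) (x : X) : ℝ≥0∞ :=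
  ∑' P : S, Set.indicator (P : Set X)
    (fun _ => (∫⁻ z in (P : Set X),
        ENNReal.ofReal (norm (b z - cavg μ b (P : Set X)) * norm (f z)) ∂μ)
      / μ (P : Set X)) x

/-- An admissible sextuple `(K, ξ, A, ε, B, B̃)` with `B = B(y₀,r)`, `B̃ = B(x₀,r)`. -/
structure Admissible [MeasurableSpace X] (d : X → X → ℝ) (μ : Measure X) (A₀ : ℝ)
    (K : X → X → ℂ) (ξ A ε r : ℝ) (y₀ x₀ : X) : Prop where
  r_pos : 0 < r
  xi_ge_one : 1 ≤ ξ
  A_ge : 2 * A₀ ^ 2 + A₀ ≤ A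
  eps_pos : 0 < ε
  sep : ∀ y ∈ qball d y₀ r, ∀ x ∈ qball d x₀ r, r ≤ d y x
  dist_lb : A * r ≤ d x₀ y₀
  dist_ub : d x₀ y₀ ≤ ξ * A * r
  K_ub : norm (K x₀ y₀) ≤ ξ / (μ (qball d y₀ (A * r))).toReal
  K_lb : 1 / (μ (qball d y₀ (A * r))).toReal ≤ ξ * norm (K x₀ y₀)
  int_y : ∀ x ∈ qball d x₀ r,
    ∫⁻ y in qball d y₀ r, ENNReal.ofReal (norm (K x y - K x₀ y₀)) ∂μ
      ≤ ENNReal.ofReal (ξ * ε) * μ (qball d y₀ r) / μ (qball d y₀ (A * r))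
  int_x : ∀ y ∈ qball d y₀ r,
    ∫⁻ x in qball d x₀ r, ENNReal.ofReal (norm (K x y - K x₀ y₀)) ∂μ
      ≤ ENNReal.ofReal (ξ * ε) * μ (qball d x₀ r) / μ (qball d y₀ (A * r))

end SHT

open SHT
section AWFAux

open Filter

variable {X : Type*} [MeasurableSpace X] {d : X → X → ℝ} {μ : MeasureTheory.Measure X}
  {A₀ Cμ : ℝ}

lemma aux_d_self (hX : IsSHT d μ A₀ Cμ) (x : X) : d x x = 0 := (hX.eq_zero_iff x x).2 rfl

lemma aux_d_pos (hX : IsSHT d μ A₀ Cμ) {x y : X} (h : x ≠ y) : 0 < d x y :=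
  lt_of_le_of_ne (hX.nonneg x y) fun h0 => h ((hX.eq_zero_iff x y).1 h0.symm)

lemma aux_A0_pos (hX : IsSHT d μ A₀ Cμ) : 0 < A₀ := lt_of_lt_of_le one_pos hX.one_le_A0

lemma aux_not_mem_qsupp (hX : IsSHT d μ A₀ Cμ) {f : X → ℂ} {S : Set X}
    (hsupp : ∀ z, f z ≠ 0 → z ∈ S) {x : X} {t : ℝ} (ht : 0 < t)
    (hfar : ∀ w ∈ S, t ≤ d x w) : x ∉ qsupp d f := by
  intro hx
  have hA0 := aux_A0_pos hX
  have hU : dOpen d {z | ∃ s, 0 < s ∧ ∀ w ∈ S, s ≤ d z w} := by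
    rintro z ⟨s, hs, hz⟩
    refine ⟨s / (2 * A₀), by positivity, fun z' hz' =>
      ⟨s / (2 * A₀), by positivity, fun w hw => ?_⟩⟩
    have h1 : d z w ≤ A₀ * (d z z' + d z' w) := hX.triangle z w z'
    have h2 : s ≤ d z w := hz w hw
    have h3 : d z z' * (2 * A₀) < s := (lt_div_iff₀ (by positivity)).1 hz'
    rw [div_le_iff₀ (by positivity)]
    nlinarith
  obtain ⟨w, hwU, hwf⟩ := hx _ hU ⟨t, ht, hfar⟩
  obtain ⟨s, hs, hsw⟩ := hwU
  have := hsw w (hsupp w hwf)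
  rw [aux_d_self hX] at this; linarith

lemma aux_doubling_pow (hX : IsSHT d μ A₀ Cμ) (x : X) (s : ℝ) (hs : 0 < s) :
    ∀ k : ℕ, μ (qball d x (2 ^ k * s)) ≤ ENNReal.ofReal Cμ ^ k * μ (qball d x s) := by
  intro k; induction k with
  | zero => simp
  | succ n ih =>
    have h1 : μ (qball d x (2 ^ (n + 1) * s)) ≤ ENNReal.ofReal Cμ * μ (qball d x (2 ^ n * s)) := by
      have h := hX.doubling x (2 ^ n * s) (by positivity)
      rw [show (2 : ℝ) * (2 ^ n * s) = 2 ^ (n + 1) * s by ring] at h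
      exact h
    calc μ (qball d x (2 ^ (n + 1) * s)) ≤ ENNReal.ofReal Cμ * μ (qball d x (2 ^ n * s)) := h1
      _ ≤ ENNReal.ofReal Cμ * (ENNReal.ofReal Cμ ^ n * μ (qball d x s)) := mul_le_mul_right ih _
      _ = ENNReal.ofReal Cμ ^ (n + 1) * μ (qball d x s) := by ring

lemma aux_net (hX : IsSHT d μ A₀ Cμ) (z₀ : X) (R ρ : ℝ) (hR : 0 < R) (hρ : 0 < ρ) :
    ∃ S : Finset X, (∀ z ∈ S, z ∈ qball d z₀ R) ∧
      ∀ y ∈ qball d z₀ R, ∃ s ∈ S, d y s < ρ := by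
  classical
  have hA0 := aux_A0_pos hX
  have hCμ0 : (0 : ℝ) ≤ Cμ := le_trans zero_le_one hX.one_le_Cmu
  set s := ρ / (2 * A₀) with hs_def
  have hs : 0 < s := by positivity
  set R' := A₀ * (R + s) with hR'_def
  have hR' : 0 < R' := by positivity
  set big := A₀ * (R + R') with hbig_def
  obtain ⟨k, hk⟩ := pow_unbounded_of_one_lt (big / s) (one_lt_two (α := ℝ))
  have hbig_le : big ≤ 2 ^ k * s := by
    rw [div_lt_iff₀ hs] at hk; linarith
  set N := ⌈Cμ ^ k⌉₊ with hN
  have hcard : ∀ S : Finset X, (∀ z ∈ S, z ∈ qball d z₀ R) →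
      (∀ a ∈ S, ∀ b ∈ S, a ≠ b → ρ ≤ d a b) → S.card ≤ N := by
    intro S hSsub hSsep
    have hdisj : (↑S : Set X).PairwiseDisjoint (fun z => qball d z s) := by
      intro p hp q hq hpq
      rw [Function.onFun, Set.disjoint_left]
      intro w hwp hwq
      have h1 : d p q ≤ A₀ * (d p w + d w q) := hX.triangle p q w
      rw [hX.symm w q] at h1
      have h3 := hSsep p (Finset.mem_coe.1 hp) q (Finset.mem_coe.1 hq) hpq
      have hwp' : d p w < s := hwp
      have hwq' : d q w < s := hwq
      have h4 : A₀ * (d p w + d q w) < A₀ * (2 * s) := by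
        apply mul_lt_mul_of_pos_left _ hA0; linarith
      have h5 : A₀ * (2 * s) = ρ := by rw [hs_def]; field_simp
      linarith
    have hUsub : (⋃ z ∈ S, qball d z s) ⊆ qball d z₀ R' := by
      intro w hw
      simp only [Set.mem_iUnion] at hw
      obtain ⟨z, hzS, hzw⟩ := hw
      have h1 : d z₀ w ≤ A₀ * (d z₀ z + d z w) := hX.triangle _ _ _
      have h2 : d z₀ z < R := hSsub z hzS
      have h3 : d z w < s := hzw
      show d z₀ w < R'
      calc d z₀ w ≤ A₀ * (d z₀ z + d z w) := h1
        _ < A₀ * (R + s) := by apply mul_lt_mul_of_pos_left _ hA0; linarith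
        _ = R' := rfl
    have hPle : ∀ z ∈ S, μ (qball d z₀ R') ≤ ENNReal.ofReal Cμ ^ k * μ (qball d z s) := by
      intro z hzS
      have hsub1 : qball d z₀ R' ⊆ qball d z (2 ^ k * s) := by
        intro w hw
        have h1 : d z w ≤ A₀ * (d z z₀ + d z₀ w) := hX.triangle _ _ _
        have h2 : d z z₀ < R := by rw [hX.symm]; exact hSsub z hzS
        have h3 : d z₀ w < R' := hw
        show d z w < 2 ^ k * s
        calc d z w ≤ A₀ * (d z z₀ + d z₀ w) := h1
          _ < A₀ * (R + R') := by apply mul_lt_mul_of_pos_left _ hA0; linarith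
          _ ≤ 2 ^ k * s := hbig_le
      calc μ (qball d z₀ R') ≤ μ (qball d z (2 ^ k * s)) := measure_mono hsub1
        _ ≤ ENNReal.ofReal Cμ ^ k * μ (qball d z s) := aux_doubling_pow hX z s hs k
    have hsum : (S.card : ℝ≥0∞) * μ (qball d z₀ R')
        ≤ ENNReal.ofReal Cμ ^ k * μ (qball d z₀ R') := by
      calc (S.card : ℝ≥0∞) * μ (qball d z₀ R') = ∑ _z ∈ S, μ (qball d z₀ R') := by
            rw [Finset.sum_const, nsmul_eq_mul]
        _ ≤ ∑ z ∈ S, ENNReal.ofReal Cμ ^ k * μ (qball d z s) := Finset.sum_le_sum hPle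
        _ = ENNReal.ofReal Cμ ^ k * ∑ z ∈ S, μ (qball d z s) := by rw [Finset.mul_sum]
        _ = ENNReal.ofReal Cμ ^ k * μ (⋃ z ∈ S, qball d z s) := by
            rw [measure_biUnion_finset hdisj fun z _ => hX.meas_ball z s]
        _ ≤ _ := mul_le_mul_right (measure_mono hUsub) _
    have hP0 : μ (qball d z₀ R') ≠ 0 := (hX.ball_pos _ _ hR').ne'
    have hPt : μ (qball d z₀ R') ≠ ⊤ := (hX.ball_ne_top _ _).ne
    have hcard' : (S.card : ℝ≥0∞) ≤ ENNReal.ofReal Cμ ^ k :=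
      (ENNReal.mul_le_mul_iff_left hP0 hPt).1 hsum
    have hcr : (S.card : ℝ) ≤ Cμ ^ k := by
      rw [← ENNReal.ofReal_pow hCμ0, ← ENNReal.ofReal_natCast,
        ENNReal.ofReal_le_ofReal_iff (by positivity)] at hcard'
      exact hcard'
    exact_mod_cast hcr.trans (Nat.le_ceil _)
  set P' : ℕ → Prop := fun n => ∃ S : Finset X, (∀ z ∈ S, z ∈ qball d z₀ R) ∧
      (∀ a ∈ S, ∀ b ∈ S, a ≠ b → ρ ≤ d a b) ∧ S.card = n with hP'
  have h0 : P' 0 := ⟨∅, by simp, by simp, rfl⟩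
  obtain ⟨S, hS1, hS2, hScard⟩ := Nat.findGreatest_spec (Nat.zero_le N) h0
  refine ⟨S, hS1, fun y hy => ?_⟩
  by_contra hcon
  push_neg at hcon
  have hynot : y ∉ S := by
    intro hyS
    have h := hcon y hyS
    rw [aux_d_self hX] at h; linarith
  have hS'card : (insert y S).card = S.card + 1 := Finset.card_insert_of_notMem hynot
  have hP'succ : P' (S.card + 1) := by
    refine ⟨insert y S, ?_, ?_, hS'card⟩
    · intro z hz; rcases Finset.mem_insert.1 hz with rfl | hzS
      · exact hy
      · exact hS1 z hzS
    · intro p hp q hq hpq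
      rcases Finset.mem_insert.1 hp with rfl | hpS <;> rcases Finset.mem_insert.1 hq with rfl | hqS
      · exact absurd rfl hpq
      · exact hcon q hqS
      · rw [hX.symm]; exact hcon p hpS
      · exact hS2 p hpS q hqS hpq
  have hle : S.card + 1 ≤ N := by
    obtain ⟨S', h1, h2, h3⟩ := hP'succ
    exact h3 ▸ hcard S' h1 h2
  exact Nat.findGreatest_is_greatest (by omega) hle hP'succ

lemma aux_dense_seq [Nonempty X] (hX : IsSHT d μ A₀ Cμ) (z₀ : X) (R : ℝ) (hR : 0 < R) :
    ∃ e : ℕ → X, (∀ i, e i ∈ qball d z₀ R) ∧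
      ∀ y ∈ qball d z₀ R, ∀ ρ : ℝ, 0 < ρ → ∃ i, d y (e i) < ρ := by
  choose S hS1 hS2 using fun n : ℕ => aux_net hX z₀ R (1 / ((n : ℝ) + 1)) hR (by positivity)
  have hz₀ : z₀ ∈ qball d z₀ R := by
    show d z₀ z₀ < R; rw [aux_d_self hX]; exact hR
  have hDc : (⋃ n, ((S n : Finset X) : Set X)).Countable :=
    Set.countable_iUnion fun n => (S n).countable_toSet
  have hDne : (⋃ n, ((S n : Finset X) : Set X)).Nonempty := by
    obtain ⟨t, ht, _⟩ := hS2 0 z₀ hz₀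
    exact ⟨t, Set.mem_iUnion.2 ⟨0, Finset.mem_coe.2 ht⟩⟩
  obtain ⟨e, he⟩ := hDc.exists_eq_range hDne
  refine ⟨e, fun i => ?_, fun y hy ρ hρ => ?_⟩
  · have hei : e i ∈ ⋃ n, ((S n : Finset X) : Set X) := he ▸ Set.mem_range_self i
    obtain ⟨n, hn⟩ := Set.mem_iUnion.1 hei
    exact hS1 n _ (Finset.mem_coe.1 hn)
  · obtain ⟨n, hn⟩ := exists_nat_one_div_lt hρ
    obtain ⟨t, ht, hdt⟩ := hS2 n y hy
    have htD : t ∈ ⋃ m, ((S m : Finset X) : Set X) := Set.mem_iUnion.2 ⟨n, Finset.mem_coe.2 ht⟩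
    rw [he] at htD
    obtain ⟨i, rfl⟩ := htD
    exact ⟨i, hdt.trans hn⟩

end AWFAux
section AWFAux2
open scoped Classical

open Filter

variable {X : Type*} [MeasurableSpace X] {d : X → X → ℝ} {μ : MeasureTheory.Measure X}
  {A₀ Cμ : ℝ}

lemma aux_sec_meas (hX : IsSHT d μ A₀ Cμ) {K : X → X → ℂ} {cK : ℝ} {ω : ℝ → ℝ}
    (hK : IsCZKernel d μ A₀ K cK ω)
    {p₂ : X} {ρ₂ : ℝ} (e : ℕ → X)
    (hed : ∀ y ∈ qball d p₂ ρ₂, ∀ ρ : ℝ, 0 < ρ → ∃ i, d y (e i) < ρ)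
    (z : X) {r₀ : ℝ} (hr₀ : 0 < r₀) (hfar : ∀ w ∈ qball d p₂ ρ₂, r₀ ≤ d z w) :
    Measurable (fun y => if y ∈ qball d p₂ ρ₂ then K z y else 0) := by
  classical
  set B₂ := qball d p₂ ρ₂ with hB₂
  have hmB₂ : MeasurableSet B₂ := hX.meas_ball _ _
  have htot : ∀ m : ℕ, ∀ y : X, ∃ n : ℕ,
      ((y ∈ B₂ ∧ d (e n) y < (1 / 2 : ℝ) ^ m) ∨ (y ∉ B₂ ∧ n = 0)) := by
    intro m y
    by_cases hy : y ∈ B₂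
    · obtain ⟨i, hi⟩ := hed y hy ((1 / 2 : ℝ) ^ m) (by positivity)
      exact ⟨i, Or.inl ⟨hy, by rwa [hX.symm]⟩⟩
    · exact ⟨0, Or.inr ⟨hy, rfl⟩⟩
  set ψ : ℕ → X → ℂ := fun m y =>
    (fun n (y' : X) => if y' ∈ B₂ then K z (e n) else 0) (Nat.find (htot m y)) y with hψ_def
  have hψm : ∀ m, Measurable (ψ m) := by
    intro m
    apply Measurable.find (f := fun n (y' : X) => if y' ∈ B₂ then K z (e n) else 0)
      (p := fun n y' => (y' ∈ B₂ ∧ d (e n) y' < (1 / 2 : ℝ) ^ m) ∨ (y' ∉ B₂ ∧ n = 0))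
    · exact fun n => Measurable.ite hmB₂ measurable_const measurable_const
    · intro n
      have hset : {y' | (y' ∈ B₂ ∧ d (e n) y' < (1 / 2 : ℝ) ^ m) ∨ (y' ∉ B₂ ∧ n = 0)}
          = (B₂ ∩ qball d (e n) ((1 / 2 : ℝ) ^ m)) ∪ (B₂ᶜ ∩ {_y : X | n = 0}) := by
        ext y'
        simp only [Set.mem_setOf_eq, Set.mem_union, Set.mem_inter_iff, Set.mem_compl_iff]
        exact Iff.rfl
      rw [hset]
      exact ((hmB₂.inter (hX.meas_ball _ _)).union (hmB₂.compl.inter (MeasurableSet.const _)))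
  have hconv : ∀ y, Tendsto (fun m => ψ m y) atTop (nhds (if y ∈ B₂ then K z y else 0)) := by
    intro y
    by_cases hy : y ∈ B₂
    · simp only [hy, if_true]
      have hdzy : r₀ ≤ d z y := hfar y hy
      have hdzy0 : 0 < d y z := by rw [hX.symm]; linarith
      have hyz : y ≠ z := by
        intro h; rw [h, aux_d_self hX] at hdzy0; exact lt_irrefl _ hdzy0
      set V := (μ (qball d y (d y z))).toReal with hV
      have hnear : ∀ m, d (e (Nat.find (htot m y))) y < (1 / 2 : ℝ) ^ m := by
        intro m
        rcases Nat.find_spec (htot m y) with ⟨_, h⟩ | ⟨h, _⟩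
        · exact h
        · exact absurd hy h
      have hψval : ∀ m, ψ m y = K z (e (Nat.find (htot m y))) := fun m => if_pos hy
      set t : ℕ → ℝ := fun m => d y (e (Nat.find (htot m y))) / d y z with ht_def
      have hkey : ∀ m, (1 / 2 : ℝ) ^ m < (2 * A₀)⁻¹ * d y z →
          norm (ψ m y - K z y) ≤ ω (t m) / V := by
        intro m hm
        have hlt : d y (e (Nat.find (htot m y))) < (2 * A₀)⁻¹ * d y z := by
          rw [hX.symm]; exact lt_trans (hnear m) hm
        have hreg := hK.regularity y (e (Nat.find (htot m y))) z hyz hlt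
        have h1 : norm (ψ m y - K z y)
            = norm (K z y - K z (e (Nat.find (htot m y)))) := by
          rw [hψval m, norm_sub_rev]
        rw [h1]
        refine le_trans ?_ hreg
        exact le_add_of_nonneg_left (norm_nonneg _)
      have hev : ∀ᶠ m in atTop, (1 / 2 : ℝ) ^ m < (2 * A₀)⁻¹ * d y z := by
        have hA0 := aux_A0_pos hX
        exact (tendsto_pow_atTop_nhds_zero_of_lt_one (by norm_num) (by norm_num)).eventually_lt_const
          (by positivity)
      have ht0 : ∀ m, 0 ≤ t m := fun m => div_nonneg (hX.nonneg _ _) hdzy0.le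
      have htle : ∀ m, t m ≤ (1 / 2 : ℝ) ^ m / d y z := by
        intro m
        apply (div_le_div_iff_of_pos_right hdzy0).2
        rw [hX.symm]; exact (hnear m).le
      have httends : Tendsto t atTop (nhds 0) := by
        apply squeeze_zero ht0 htle
        have := (tendsto_pow_atTop_nhds_zero_of_lt_one (by norm_num : (0:ℝ) ≤ 1/2)
          (by norm_num : (1/2:ℝ) < 1)).div_const (d y z)
        simpa using this
      have htmem : ∀ᶠ m in atTop, t m ∈ Set.Icc (0 : ℝ) 1 := by
        filter_upwards [hev] with m hm
        refine ⟨ht0 m, ?_⟩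
        have hA0 := aux_A0_pos hX
        have h2 : (2 * A₀)⁻¹ ≤ 1 := by
          rw [inv_le_one_iff₀]; right; linarith [hX.one_le_A0]
        have h3 : t m ≤ (1 / 2 : ℝ) ^ m / d y z := htle m
        have h4 : (1 / 2 : ℝ) ^ m / d y z < (2 * A₀)⁻¹ := by
          rw [div_lt_iff₀ hdzy0]
          calc (1 / 2 : ℝ) ^ m < (2 * A₀)⁻¹ * d y z := hm
            _ = (2 * A₀)⁻¹ * d y z := rfl
        linarith
      have hωt : Tendsto (fun m => ω (t m)) atTop (nhds 0) := by
        have hc : ContinuousWithinAt ω (Set.Icc 0 1) 0 :=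
          hK.omega_cont 0 ⟨le_refl 0, zero_le_one⟩
        have h := hc.tendsto.comp (tendsto_nhdsWithin_iff.2 ⟨httends, htmem⟩)
        rwa [hK.omega_zero] at h
      have hbd : Tendsto (fun m => ω (t m) / V) atTop (nhds 0) := by
        have := hωt.div_const V
        simpa using this
      have hdiff : Tendsto (fun m => ψ m y - K z y) atTop (nhds 0) := by
        apply squeeze_zero_norm' _ hbd
        filter_upwards [hev] with m hm
        exact hkey m hm
      have := hdiff.add_const (K z y)
      simpa using this
    · simp only [hy, if_false]
      have hval : ∀ m, ψ m y = 0 := fun m => if_neg hy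
      simp only [hval]
      exact tendsto_const_nhds
  exact measurable_of_tendsto_metrizable' atTop hψm (tendsto_pi_nhds.2 hconv)

lemma aux_joint_meas (hX : IsSHT d μ A₀ Cμ) {K : X → X → ℂ} {cK : ℝ} {ω : ℝ → ℝ}
    (hK : IsCZKernel d μ A₀ K cK ω)
    {p₁ p₂ : X} {ρ₁ ρ₂ : ℝ}
    (e₁ : ℕ → X) (he₁mem : ∀ i, e₁ i ∈ qball d p₁ ρ₁)
    (he₁ : ∀ x ∈ qball d p₁ ρ₁, ∀ ρ : ℝ, 0 < ρ → ∃ i, d x (e₁ i) < ρ)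
    (e₂ : ℕ → X) (he₂ : ∀ y ∈ qball d p₂ ρ₂, ∀ ρ : ℝ, 0 < ρ → ∃ i, d y (e₂ i) < ρ)
    {r₀ : ℝ} (hr₀ : 0 < r₀)
    (hsep : ∀ x ∈ qball d p₁ ρ₁, ∀ y ∈ qball d p₂ ρ₂, r₀ ≤ d x y) :
    Measurable (fun q : X × X =>
      if q.1 ∈ qball d p₁ ρ₁ ∧ q.2 ∈ qball d p₂ ρ₂ then K q.1 q.2 else 0) := by
  classical
  set B₁ := qball d p₁ ρ₁ with hB₁
  set B₂ := qball d p₂ ρ₂ with hB₂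
  have hmB₁ : MeasurableSet B₁ := hX.meas_ball _ _
  have hmB₂ : MeasurableSet B₂ := hX.meas_ball _ _
  have hσ : ∀ n, Measurable (fun y => if y ∈ B₂ then K (e₁ n) y else 0) := fun n =>
    aux_sec_meas hX hK e₂ he₂ (e₁ n) hr₀ (fun w hw => hsep (e₁ n) (he₁mem n) w hw)
  have htot : ∀ m : ℕ, ∀ q : X × X, ∃ n : ℕ,
      ((q.1 ∈ B₁ ∧ d (e₁ n) q.1 < (1 / 2 : ℝ) ^ m) ∨ (q.1 ∉ B₁ ∧ n = 0)) := by
    intro m q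
    by_cases hq : q.1 ∈ B₁
    · obtain ⟨i, hi⟩ := he₁ q.1 hq ((1 / 2 : ℝ) ^ m) (by positivity)
      exact ⟨i, Or.inl ⟨hq, by rwa [hX.symm]⟩⟩
    · exact ⟨0, Or.inr ⟨hq, rfl⟩⟩
  set Ξ : ℕ → X × X → ℂ := fun m q =>
    (fun n (q' : X × X) => if q'.1 ∈ B₁ then (if q'.2 ∈ B₂ then K (e₁ n) q'.2 else 0) else 0)
      (Nat.find (htot m q)) q with hΞ_def
  have hΞm : ∀ m, Measurable (Ξ m) := by
    intro m
    apply Measurable.find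
      (f := fun n (q' : X × X) =>
        if q'.1 ∈ B₁ then (if q'.2 ∈ B₂ then K (e₁ n) q'.2 else 0) else 0)
      (p := fun n q' => (q'.1 ∈ B₁ ∧ d (e₁ n) q'.1 < (1 / 2 : ℝ) ^ m) ∨ (q'.1 ∉ B₁ ∧ n = 0))
    · intro n
      have : MeasurableSet {q' : X × X | q'.1 ∈ B₁} := hmB₁.preimage measurable_fst
      exact Measurable.ite this ((hσ n).comp measurable_snd) measurable_const
    · intro n
      have hset : {q' : X × X |
          (q'.1 ∈ B₁ ∧ d (e₁ n) q'.1 < (1 / 2 : ℝ) ^ m) ∨ (q'.1 ∉ B₁ ∧ n = 0)}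
          = ((Prod.fst ⁻¹' B₁) ∩ (Prod.fst ⁻¹' qball d (e₁ n) ((1 / 2 : ℝ) ^ m)))
            ∪ ((Prod.fst ⁻¹' B₁)ᶜ ∩ {_q : X × X | n = 0}) := by
        ext q'
        simp only [Set.mem_setOf_eq, Set.mem_union, Set.mem_inter_iff, Set.mem_compl_iff,
          Set.mem_preimage]
        exact Iff.rfl
      rw [hset]
      exact (((hmB₁.preimage measurable_fst).inter
        ((hX.meas_ball _ _).preimage measurable_fst)).union
        (((hmB₁.preimage measurable_fst).compl).inter (MeasurableSet.const _)))
  have hconv : ∀ q : X × X, Tendsto (fun m => Ξ m q) atTop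
      (nhds (if q.1 ∈ B₁ ∧ q.2 ∈ B₂ then K q.1 q.2 else 0)) := by
    intro q
    by_cases hq1 : q.1 ∈ B₁
    · by_cases hq2 : q.2 ∈ B₂
      · simp only [hq1, hq2, and_self, if_true]
        have hd12 : r₀ ≤ d q.1 q.2 := hsep q.1 hq1 q.2 hq2
        have hd0 : 0 < d q.1 q.2 := lt_of_lt_of_le hr₀ hd12
        have hne : q.1 ≠ q.2 := by
          intro h; rw [h, aux_d_self hX] at hd0; exact lt_irrefl _ hd0
        set V := (μ (qball d q.1 (d q.1 q.2))).toReal with hV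
        have hnear : ∀ m, d (e₁ (Nat.find (htot m q))) q.1 < (1 / 2 : ℝ) ^ m := by
          intro m
          rcases Nat.find_spec (htot m q) with ⟨_, h⟩ | ⟨h, _⟩
          · exact h
          · exact absurd hq1 h
        have hΞval : ∀ m, Ξ m q = K (e₁ (Nat.find (htot m q))) q.2 := fun m => by
          show (if q.1 ∈ B₁ then (if q.2 ∈ B₂ then _ else 0) else 0) = _
          rw [if_pos hq1, if_pos hq2]
        set t : ℕ → ℝ := fun m => d q.1 (e₁ (Nat.find (htot m q))) / d q.1 q.2 with ht_def
        have hkey : ∀ m, (1 / 2 : ℝ) ^ m < (2 * A₀)⁻¹ * d q.1 q.2 →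
            norm (Ξ m q - K q.1 q.2) ≤ ω (t m) / V := by
          intro m hm
          have hlt : d q.1 (e₁ (Nat.find (htot m q))) < (2 * A₀)⁻¹ * d q.1 q.2 := by
            rw [hX.symm]; exact lt_trans (hnear m) hm
          have hreg := hK.regularity q.1 (e₁ (Nat.find (htot m q))) q.2 hne hlt
          have h1 : norm (Ξ m q - K q.1 q.2)
              = norm (K q.1 q.2 - K (e₁ (Nat.find (htot m q))) q.2) := by
            rw [hΞval m, norm_sub_rev]
          rw [h1]
          refine le_trans ?_ hreg
          exact le_add_of_nonneg_right (norm_nonneg _)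
        have hev : ∀ᶠ m in atTop, (1 / 2 : ℝ) ^ m < (2 * A₀)⁻¹ * d q.1 q.2 := by
          have hA0 := aux_A0_pos hX
          exact (tendsto_pow_atTop_nhds_zero_of_lt_one (by norm_num)
            (by norm_num)).eventually_lt_const (by positivity)
        have ht0 : ∀ m, 0 ≤ t m := fun m => div_nonneg (hX.nonneg _ _) hd0.le
        have htle : ∀ m, t m ≤ (1 / 2 : ℝ) ^ m / d q.1 q.2 := by
          intro m
          apply (div_le_div_iff_of_pos_right hd0).2
          rw [hX.symm]; exact (hnear m).le
        have httends : Tendsto t atTop (nhds 0) := by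
          apply squeeze_zero ht0 htle
          have := (tendsto_pow_atTop_nhds_zero_of_lt_one (by norm_num : (0:ℝ) ≤ 1/2)
            (by norm_num : (1/2:ℝ) < 1)).div_const (d q.1 q.2)
          simpa using this
        have htmem : ∀ᶠ m in atTop, t m ∈ Set.Icc (0 : ℝ) 1 := by
          filter_upwards [hev] with m hm
          refine ⟨ht0 m, ?_⟩
          have hA0 := aux_A0_pos hX
          have h2 : (2 * A₀)⁻¹ ≤ 1 := by
            rw [inv_le_one_iff₀]; right; linarith [hX.one_le_A0]
          have h3 : t m ≤ (1 / 2 : ℝ) ^ m / d q.1 q.2 := htle m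
          have h4 : (1 / 2 : ℝ) ^ m / d q.1 q.2 < (2 * A₀)⁻¹ := by
            rw [div_lt_iff₀ hd0]; exact hm
          linarith
        have hωt : Tendsto (fun m => ω (t m)) atTop (nhds 0) := by
          have hc : ContinuousWithinAt ω (Set.Icc 0 1) 0 :=
            hK.omega_cont 0 ⟨le_refl 0, zero_le_one⟩
          have h := hc.tendsto.comp (tendsto_nhdsWithin_iff.2 ⟨httends, htmem⟩)
          rwa [hK.omega_zero] at h
        have hbd : Tendsto (fun m => ω (t m) / V) atTop (nhds 0) := by
          have := hωt.div_const V
          simpa using this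
        have hdiff : Tendsto (fun m => Ξ m q - K q.1 q.2) atTop (nhds 0) := by
          apply squeeze_zero_norm' _ hbd
          filter_upwards [hev] with m hm
          exact hkey m hm
        have := hdiff.add_const (K q.1 q.2)
        simpa using this
      · have hval : ∀ m, Ξ m q = 0 := fun m => by
          show (if q.1 ∈ B₁ then (if q.2 ∈ B₂ then _ else 0) else 0) = 0
          rw [if_pos hq1, if_neg hq2]
        have hval2 : (if q.1 ∈ B₁ ∧ q.2 ∈ B₂ then K q.1 q.2 else 0) = 0 :=
          if_neg (by tauto)
        rw [hval2]
        simp only [hval]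
        exact tendsto_const_nhds
    · have hval : ∀ m, Ξ m q = 0 := fun m => by
        show (if q.1 ∈ B₁ then (if q.2 ∈ B₂ then _ else 0) else 0) = 0
        rw [if_neg hq1]
      have hval2 : (if q.1 ∈ B₁ ∧ q.2 ∈ B₂ then K q.1 q.2 else 0) = 0 :=
        if_neg (by tauto)
      rw [hval2]
      simp only [hval]
      exact tendsto_const_nhds
  exact measurable_of_tendsto_metrizable' atTop hΞm (tendsto_pi_nhds.2 hconv)

lemma aux_int_helper {F : X → ℂ} {s : Set X} (μ : MeasureTheory.Measure X)
    (hF : MeasureTheory.AEStronglyMeasurable F (μ.restrict s)) {C : ℝ≥0∞} (hC : C ≠ ⊤)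
    (hb : ∫⁻ x in s, ENNReal.ofReal (norm (F x)) ∂μ ≤ C) :
    MeasureTheory.IntegrableOn F s μ ∧ ∫ x in s, norm (F x) ∂μ ≤ C.toReal := by
  have heq : ∀ x, ENNReal.ofReal ‖F x‖ = ENNReal.ofReal (norm (F x)) := fun x => rfl
  have hint : MeasureTheory.IntegrableOn F s μ := by
    refine ⟨hF, ?_⟩
    rw [MeasureTheory.hasFiniteIntegral_iff_norm]
    calc ∫⁻ x, ENNReal.ofReal ‖F x‖ ∂(μ.restrict s)
        = ∫⁻ x in s, ENNReal.ofReal (norm (F x)) ∂μ := MeasureTheory.lintegral_congr heq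
      _ ≤ C := hb
      _ < ⊤ := hC.lt_top
  refine ⟨hint, ?_⟩
  have h1 : ∫ x in s, norm (F x) ∂μ
      = (∫⁻ x in s, ENNReal.ofReal (norm (F x)) ∂μ).toReal := by
    rw [MeasureTheory.integral_eq_lintegral_of_nonneg_ae
      (MeasureTheory.ae_of_all _ fun x => norm_nonneg _)
      hF.norm]
  rw [h1]; exact ENNReal.toReal_mono hC hb

end AWFAux2
set_option maxHeartbeats 4000000 in
/-- Lemma 4.13 of the paper: approximate weak factorisation. -/
theorem stmt16 {X : Type*} [MeasurableSpace X] [Nonempty X]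
    (d : X → X → ℝ) (μ : MeasureTheory.Measure X) (A₀ Cμ : ℝ)
    (hX : IsSHT d μ A₀ Cμ)
    (K : X → X → ℂ) (cK : ℝ) (ω : ℝ → ℝ)
    (hK : IsCZKernel d μ A₀ K cK ω)
    (ξ A ε r : ℝ) (y₀ x₀ : X)
    (hadm : Admissible d μ A₀ K ξ A ε r y₀ x₀)
    (T Ts : (X → ℂ) → X → ℂ)
    (hT : SIO d μ K (Linftybs d) T)
    (hTs : SIO d μ (fun x y => K y x) (Linftybs d) Ts)
    (c : ℝ) (hc : 1 ≤ c) (hε : ε ≤ (2 * c * ξ ^ 2)⁻¹) :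
    ∃ C : ℝ, 0 < C ∧
      ∀ (f : X → ℂ) (g : X → ℝ), Measurable g →
        MemLinfty0 μ f (qball d y₀ r) →
        (∀ x, 0 ≤ g x) → (∀ x ∉ qball d x₀ r, g x = 0) → (∃ M : ℝ, ∀ x, g x ≤ M) →
        0 < supNormR g →
        supNormR g ≤ c / (μ (qball d x₀ r)).toReal * ∫ x in qball d x₀ r, g x ∂μ →
        ∃ h ft : X → ℂ,
          (∀ x, f x = (g x : ℂ) * T h x - h x * Ts (fun z => (g z : ℂ)) x + ft x) ∧
          MemLinfty0 μ ft {x | x ∈ qball d x₀ r ∧ g x ≠ 0} ∧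
          MemLinfty h {y | y ∈ qball d y₀ r ∧ f y ≠ 0} ∧
          supNormR g * supNorm h
            ≤ C * ((μ (qball d y₀ (A * r))).toReal / (μ (qball d x₀ r)).toReal)
              * supNorm f ∧
          supNorm ft
            ≤ C * ε * ((μ (qball d y₀ r)).toReal / (μ (qball d x₀ r)).toReal)
              * supNorm f := by
  classical
  have hr : 0 < r := hadm.r_pos
  have hA0 : (1 : ℝ) ≤ A₀ := hX.one_le_A0
  have hA0p : (0 : ℝ) < A₀ := lt_of_lt_of_le one_pos hA0
  have hξ1 : (1 : ℝ) ≤ ξ := hadm.xi_ge_one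
  have hξ0 : (0 : ℝ) < ξ := lt_of_lt_of_le one_pos hξ1
  have hc0 : (0 : ℝ) < c := lt_of_lt_of_le one_pos hc
  have hε0 : 0 < ε := hadm.eps_pos
  have hA3 : (3 : ℝ) ≤ A := le_trans (by nlinarith) hadm.A_ge
  have hAr : 0 < A * r := by nlinarith
  set B : Set X := qball d y₀ r with hB
  set B' : Set X := qball d x₀ r with hB'
  have hmB : MeasurableSet B := hX.meas_ball _ _
  have hmB' : MeasurableSet B' := hX.meas_ball _ _
  set a : ℝ := (μ (qball d y₀ (A * r))).toReal with ha_def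
  set bV : ℝ := (μ B).toReal with hbV_def
  set b' : ℝ := (μ B').toReal with hb'_def
  have hμBA_pos : (0 : ℝ≥0∞) < μ (qball d y₀ (A * r)) := hX.ball_pos _ _ hAr
  have hμBA_ne : μ (qball d y₀ (A * r)) ≠ ⊤ := (hX.ball_ne_top _ _).ne
  have ha : 0 < a := ENNReal.toReal_pos hμBA_pos.ne' hμBA_ne
  have hμB_ne : μ B ≠ ⊤ := (hX.ball_ne_top _ _).ne
  have hμB'_ne : μ B' ≠ ⊤ := (hX.ball_ne_top _ _).ne
  have hbV : 0 < bV := ENNReal.toReal_pos (hX.ball_pos _ _ hr).ne' hμB_ne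
  have hb' : 0 < b' := ENNReal.toReal_pos (hX.ball_pos _ _ hr).ne' hμB'_ne
  have hane : a ≠ 0 := ha.ne'
  have hbVne : bV ≠ 0 := hbV.ne'
  have hb'ne : b' ≠ 0 := hb'.ne'
  have hcne : c ≠ 0 := hc0.ne'
  have hξne : ξ ≠ 0 := hξ0.ne'
  haveI hfin2 : IsFiniteMeasure (μ.restrict B) :=
    ⟨by rw [Measure.restrict_apply_univ]; exact lt_top_iff_ne_top.2 hμB_ne⟩
  haveI hfin1 : IsFiniteMeasure (μ.restrict B') :=
    ⟨by rw [Measure.restrict_apply_univ]; exact lt_top_iff_ne_top.2 hμB'_ne⟩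
  have hdisjBB' : ∀ z, z ∈ B → z ∉ B' := by
    intro z hz hz'
    have hzz := hadm.sep z hz z hz'
    rw [aux_d_self hX] at hzz; linarith
  obtain ⟨e₁, he₁mem, he₁⟩ := aux_dense_seq hX x₀ r hr
  obtain ⟨e₂, he₂mem, he₂⟩ := aux_dense_seq hX y₀ r hr
  have hsep' : ∀ x ∈ B', ∀ y ∈ B, r ≤ d x y := fun x hx y hy => by
    rw [hX.symm]; exact hadm.sep y hy x hx
  set Kh : X × X → ℂ := fun q => if q.1 ∈ B' ∧ q.2 ∈ B then K q.1 q.2 else 0 with hKh_def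
  have hKhm : Measurable Kh := aux_joint_meas hX hK e₁ he₁mem he₁ e₂ he₂ hr hsep'
  set K₀ : ℂ := K x₀ y₀ with hK₀_def
  have hK₀ub : norm K₀ ≤ ξ / a := hadm.K_ub
  have hK₀lb : 1 / a ≤ ξ * norm K₀ := hadm.K_lb
  refine ⟨4 * c ^ 2 * ξ ^ 4, by positivity, ?_⟩
  intro f g hgm hf hg0 hgsupp hgbdd hNgpos hgavg
  set Ng : ℝ := supNormR g with hNg_def
  set Mf : ℝ := supNorm f with hMf_def
  have hNg0 : 0 ≤ Ng := hNgpos.le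
  have hNgne : Ng ≠ 0 := hNgpos.ne'
  obtain ⟨⟨⟨Mb, hMb⟩, hfvan⟩, hfint, hfzero⟩ := hf
  have hfbd : ∀ x, norm (f x) ≤ Mf := by
    intro x
    exact le_ciSup (f := fun x => norm (f x))
      ⟨Mb, by rintro v ⟨w, rfl⟩; exact hMb w⟩ x
  have hMf0 : 0 ≤ Mf := le_trans (norm_nonneg _) (hfbd (Classical.arbitrary X))
  obtain ⟨Mg, hMg⟩ := hgbdd
  have hgbd : ∀ x, g x ≤ Ng := by
    intro x
    have h1 : |g x| ≤ Ng := le_ciSup (f := fun x => |g x|)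
      ⟨Mg, by rintro v ⟨w, rfl⟩; show |g w| ≤ Mg; rw [abs_of_nonneg (hg0 w)]; exact hMg w⟩ x
    calc g x ≤ |g x| := le_abs_self _
      _ ≤ Ng := h1
  set I : ℝ := ∫ x in B', g x ∂μ with hI_def
  have hgInt : MeasureTheory.IntegrableOn g B' μ := by
    apply MeasureTheory.Integrable.mono' (MeasureTheory.integrable_const Ng)
      hgm.aestronglyMeasurable.restrict
    apply MeasureTheory.ae_of_all
    intro x; rw [Real.norm_eq_abs, abs_of_nonneg (hg0 x)]; exact hgbd x
  have hI0 : Ng * b' ≤ c * I := by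
    have h1 := mul_le_mul_of_nonneg_right hgavg hb'.le
    calc Ng * b' ≤ c / b' * I * b' := h1
      _ = c * I := by field_simp
  have hIpos : 0 < I := by nlinarith
  set gC : X → ℂ := fun z => ((g z : ℝ) : ℂ) with hgC_def
  have hgCbd : ∀ x, norm (gC x) ≤ Ng := fun x => by
    rw [hgC_def]
    simp only [Complex.norm_real, Real.norm_eq_abs]
    rw [abs_of_nonneg (hg0 x)]; exact hgbd x
  have hgC_supp : ∀ y, gC y ≠ 0 → y ∈ B' := by
    intro y hy
    by_contra hyB
    apply hy
    show ((g y : ℝ) : ℂ) = 0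
    rw [hgsupp y hyB]; norm_num
  have hgCmem : gC ∈ Linftybs d := ⟨⟨Ng, hgCbd⟩, ⟨x₀, r, fun y hy => hgC_supp y hy⟩⟩
  have hgCm : Measurable gC := Complex.measurable_ofReal.comp hgm
  set ν₁ := μ.restrict B' with hν₁
  set ν₂ := μ.restrict B with hν₂
  set H : X → ℂ := fun y => ∫ x, gC x * Kh (x, y) ∂ν₁ with hH_def
  have hHsm : MeasureTheory.StronglyMeasurable H := by
    have hm : MeasureTheory.StronglyMeasurable (fun q : X × X => gC q.1 * Kh q) :=
      ((hgCm.comp measurable_fst).mul hKhm).stronglyMeasurable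
    exact hm.integral_prod_left'
  have hsecm1 : ∀ y : X, MeasureTheory.AEStronglyMeasurable (fun x => Kh (x, y)) ν₁ := fun y =>
    (hKhm.comp (measurable_id.prodMk measurable_const)).stronglyMeasurable.aestronglyMeasurable
  have hsecm2 : ∀ x : X, MeasureTheory.AEStronglyMeasurable (fun y => Kh (x, y)) ν₂ := fun x =>
    (hKhm.comp (measurable_const.prodMk measurable_id)).stronglyMeasurable.aestronglyMeasurable
  have hint_x : ∀ y ∈ B, MeasureTheory.IntegrableOn (fun x => Kh (x, y) - K₀) B' μ ∧
      ∫ x in B', norm (Kh (x, y) - K₀) ∂μ ≤ ξ * ε * b' / a := by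
    intro y hy
    have hcong : ∫⁻ x in B', ENNReal.ofReal (norm (Kh (x, y) - K₀)) ∂μ
        = ∫⁻ x in B', ENNReal.ofReal (norm (K x y - K x₀ y₀)) ∂μ := by
      apply MeasureTheory.setLIntegral_congr_fun hmB'
      intro x hx
      have hKv : Kh (x, y) = K x y := by
        rw [hKh_def]; exact if_pos ⟨hx, hy⟩
      dsimp only; rw [hKv, hK₀_def]
    have hble : ∫⁻ x in B', ENNReal.ofReal (norm (Kh (x, y) - K₀)) ∂μ
        ≤ ENNReal.ofReal (ξ * ε) * μ B' / μ (qball d y₀ (A * r)) := by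
      rw [hcong]; exact hadm.int_x y hy
    have hfinC : ENNReal.ofReal (ξ * ε) * μ B' / μ (qball d y₀ (A * r)) ≠ ⊤ :=
      (ENNReal.div_lt_top (ENNReal.mul_ne_top ENNReal.ofReal_ne_top hμB'_ne) hμBA_pos.ne').ne
    obtain ⟨h1, h2⟩ := aux_int_helper μ ((hsecm1 y).sub MeasureTheory.aestronglyMeasurable_const)
      hfinC hble
    refine ⟨h1, le_trans h2 (le_of_eq ?_)⟩
    rw [ENNReal.toReal_div, ENNReal.toReal_mul, ENNReal.toReal_ofReal (by positivity)]
  have hint_y : ∀ x ∈ B', MeasureTheory.IntegrableOn (fun y => Kh (x, y) - K₀) B μ ∧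
      ∫ y in B, norm (Kh (x, y) - K₀) ∂μ ≤ ξ * ε * bV / a := by
    intro x hx
    have hcong : ∫⁻ y in B, ENNReal.ofReal (norm (Kh (x, y) - K₀)) ∂μ
        = ∫⁻ y in B, ENNReal.ofReal (norm (K x y - K x₀ y₀)) ∂μ := by
      apply MeasureTheory.setLIntegral_congr_fun hmB
      intro y hy
      have hKv : Kh (x, y) = K x y := by
        rw [hKh_def]; exact if_pos ⟨hx, hy⟩
      dsimp only; rw [hKv, hK₀_def]
    have hble : ∫⁻ y in B, ENNReal.ofReal (norm (Kh (x, y) - K₀)) ∂μ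
        ≤ ENNReal.ofReal (ξ * ε) * μ B / μ (qball d y₀ (A * r)) := by
      rw [hcong]; exact hadm.int_y x hx
    have hfinC : ENNReal.ofReal (ξ * ε) * μ B / μ (qball d y₀ (A * r)) ≠ ⊤ :=
      (ENNReal.div_lt_top (ENNReal.mul_ne_top ENNReal.ofReal_ne_top hμB_ne) hμBA_pos.ne').ne
    obtain ⟨h1, h2⟩ := aux_int_helper μ ((hsecm2 x).sub MeasureTheory.aestronglyMeasurable_const)
      hfinC hble
    refine ⟨h1, le_trans h2 (le_of_eq ?_)⟩
    rw [ENNReal.toReal_div, ENNReal.toReal_mul, ENNReal.toReal_ofReal (by positivity)]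
  have hKg_int : ∀ y ∈ B, MeasureTheory.Integrable (fun x => gC x * (Kh (x, y) - K₀)) ν₁ := by
    intro y hy
    exact MeasureTheory.Integrable.bdd_mul (hint_x y hy).1
      hgCm.stronglyMeasurable.aestronglyMeasurable
      (MeasureTheory.ae_of_all _ fun x => hgCbd x)
  have hgCint : MeasureTheory.Integrable gC ν₁ := by
    apply MeasureTheory.Integrable.mono' (MeasureTheory.integrable_const Ng)
      hgCm.stronglyMeasurable.aestronglyMeasurable
    exact MeasureTheory.ae_of_all _ fun x => by exact hgCbd x
  have hIC : ∫ x, gC x ∂ν₁ = ((I : ℝ) : ℂ) := by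
    rw [hI_def, hgC_def]
    exact integral_ofReal
  have hKgK_int : ∀ y ∈ B, MeasureTheory.Integrable (fun x => gC x * Kh (x, y)) ν₁ := by
    intro y hy
    have heq : (fun x => gC x * Kh (x, y))
        = fun x => gC x * (Kh (x, y) - K₀) + gC x * K₀ := by
      funext x; ring
    rw [heq]
    exact (hKg_int y hy).add (hgCint.mul_const K₀)
  have hH_sub : ∀ y ∈ B, H y - K₀ * (I : ℂ) = ∫ x, gC x * (Kh (x, y) - K₀) ∂ν₁ := by
    intro y hy
    have h2 : ∫ x, gC x * (Kh (x, y) - K₀) ∂ν₁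
        = (∫ x, gC x * Kh (x, y) ∂ν₁) - ∫ x, gC x * K₀ ∂ν₁ := by
      rw [← MeasureTheory.integral_sub (hKgK_int y hy) (hgCint.mul_const K₀)]
      congr 1; funext x; ring
    rw [h2, MeasureTheory.integral_mul_const, hIC]
    show H y - K₀ * (I : ℂ) = H y - (I : ℂ) * K₀
    ring
  set Er : ℝ := ξ * ε * b' / a * Ng with hEr_def
  have hEr0 : 0 ≤ Er := by positivity
  have hH_err : ∀ y ∈ B, norm (H y - K₀ * (I : ℂ)) ≤ Er := by
    intro y hy
    rw [hH_sub y hy]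
    have hnormint : MeasureTheory.Integrable
        (fun x => Ng * norm (Kh (x, y) - K₀)) ν₁ := by
      have := ((hint_x y hy).1.norm.const_mul Ng)
      exact this
    calc ‖∫ x, gC x * (Kh (x, y) - K₀) ∂ν₁‖
        ≤ ∫ x, ‖gC x * (Kh (x, y) - K₀)‖ ∂ν₁ := MeasureTheory.norm_integral_le_integral_norm _
      _ ≤ ∫ x, Ng * norm (Kh (x, y) - K₀) ∂ν₁ := by
          apply MeasureTheory.integral_mono (hKg_int y hy).norm hnormint
          intro x
          show ‖gC x * (Kh (x, y) - K₀)‖ ≤ Ng * norm (Kh (x, y) - K₀)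
          rw [norm_mul]
          exact mul_le_mul_of_nonneg_right (hgCbd x) (norm_nonneg _)
      _ = Ng * ∫ x, norm (Kh (x, y) - K₀) ∂ν₁ := MeasureTheory.integral_const_mul _ _
      _ ≤ Ng * (ξ * ε * b' / a) := mul_le_mul_of_nonneg_left (hint_x y hy).2 hNg0
      _ = Er := by rw [hEr_def]; ring
  set δ : ℝ := Ng * b' / (2 * c * ξ * a) with hδ_def
  have hδ : 0 < δ := by rw [hδ_def]; positivity
  have hδne : δ ≠ 0 := hδ.ne'
  have hK₀abs : 1 / (ξ * a) ≤ norm K₀ := by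
    rw [div_le_iff₀ (mul_pos hξ0 ha)]
    rw [div_le_iff₀ ha] at hK₀lb
    nlinarith
  have h2δ : 2 * δ ≤ norm (K₀ * (I : ℂ)) := by
    rw [norm_mul, Complex.norm_real, Real.norm_eq_abs, abs_of_nonneg hIpos.le]
    have h1 : Ng * b' / c ≤ I := by rw [div_le_iff₀ hc0]; linarith
    calc 2 * δ = 1 / (ξ * a) * (Ng * b' / c) := by rw [hδ_def]; field_simp
      _ ≤ norm K₀ * I :=
          mul_le_mul hK₀abs h1 (by positivity) (norm_nonneg _)
  have hEr_le_δ : Er ≤ δ := by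
    have hkey : ε * (2 * c * ξ ^ 2) ≤ 1 := by
      have h2 : (0 : ℝ) < 2 * c * ξ ^ 2 := by positivity
      calc ε * (2 * c * ξ ^ 2) ≤ (2 * c * ξ ^ 2)⁻¹ * (2 * c * ξ ^ 2) :=
          mul_le_mul_of_nonneg_right hε h2.le
        _ = 1 := inv_mul_cancel₀ h2.ne'
    have hid : Er = ε * (2 * c * ξ ^ 2) * δ := by
      rw [hEr_def, hδ_def]; field_simp
    rw [hid]
    calc ε * (2 * c * ξ ^ 2) * δ ≤ 1 * δ := mul_le_mul_of_nonneg_right hkey hδ.le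
      _ = δ := one_mul δ
  have hHlb : ∀ y ∈ B, δ ≤ norm (H y) := by
    intro y hy
    have h1 := hH_err y hy
    have h3 : ‖K₀ * (I : ℂ)‖ ≤ ‖H y‖ + ‖H y - K₀ * (I : ℂ)‖ := by
      simpa [sub_sub_cancel] using norm_sub_le (H y) (H y - K₀ * (I : ℂ))
    linarith
  have hHne : ∀ y ∈ B, H y ≠ 0 := by
    intro y hy h0
    have := hHlb y hy
    rw [h0, norm_zero] at this
    linarith
  set h : X → ℂ := fun y => if y ∈ B then -f y / H y else 0 with hh_def
  have hhval : ∀ y ∈ B, h y = -f y / H y := fun y hy => if_pos hy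
  have hhval0 : ∀ y, y ∉ B → h y = 0 := fun y hy => if_neg hy
  have hhbd : ∀ y, norm (h y) ≤ Mf / δ := by
    intro y
    by_cases hy : y ∈ B
    · rw [hhval y hy, norm_div, norm_neg]
      exact div_le_div₀ hMf0 (hfbd y) hδ (hHlb y hy)
    · rw [hhval0 y hy, norm_zero]; positivity
  have hhvan : ∀ y, y ∉ {y | y ∈ B ∧ f y ≠ 0} → h y = 0 := by
    intro y hy
    by_cases hyB : y ∈ B
    · have hfy : f y = 0 := by
        by_contra hfy; exact hy ⟨hyB, hfy⟩
      rw [hhval y hyB, hfy]; simp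
    · exact hhval0 y hyB
  have hhmem : h ∈ Linftybs d := by
    refine ⟨⟨Mf / δ, hhbd⟩, ⟨y₀, r, fun y hy => ?_⟩⟩
    by_contra hlt
    exact hy (hhval0 y hlt)
  have hfaesm : MeasureTheory.AEStronglyMeasurable f μ := hfint.aestronglyMeasurable
  have hhaesm : MeasureTheory.AEStronglyMeasurable h μ := by
    have hind : h = B.indicator (fun y => -f y / H y) := by
      funext y; rw [hh_def, Set.indicator_apply]
    rw [hind]
    apply (aestronglyMeasurable_indicator_iff hmB).2
    exact ((hfaesm.restrict.aemeasurable.neg).div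
      hHsm.measurable.aemeasurable).aestronglyMeasurable
  have hhint2 : MeasureTheory.Integrable h ν₂ := by
    apply MeasureTheory.Integrable.mono' (MeasureTheory.integrable_const (Mf / δ))
      hhaesm.restrict
    exact MeasureTheory.ae_of_all _ fun y => by exact hhbd y
  set Φ : X → ℂ := fun x => ∫ y, Kh (x, y) * h y ∂ν₂ with hΦ_def
  have hKh_snd_aesm : MeasureTheory.AEStronglyMeasurable
      (fun q : X × X => Kh q * h q.2) (ν₁.prod ν₂) := by
    apply MeasureTheory.AEStronglyMeasurable.mul
      hKhm.stronglyMeasurable.aestronglyMeasurable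
    exact hhaesm.restrict.comp_quasiMeasurePreserving
      MeasureTheory.Measure.quasiMeasurePreserving_snd
  have hΦaesm : MeasureTheory.AEStronglyMeasurable Φ ν₁ := hKh_snd_aesm.integral_prod_right'
  
  have hKh_lint : ∫⁻ q, ENNReal.ofReal (norm (Kh q)) ∂(ν₁.prod ν₂) < ⊤ := by
    have hmes : Measurable fun q : X × X => ENNReal.ofReal (norm (Kh q)) :=
      ENNReal.measurable_ofReal.comp (continuous_norm.measurable.comp hKhm)
    rw [MeasureTheory.lintegral_prod _ hmes.aemeasurable]
    set Cin : ℝ≥0∞ := ENNReal.ofReal (ξ * ε) * μ B / μ (qball d y₀ (A * r))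
      + ENNReal.ofReal (norm K₀) * μ B with hCin
    have hCin_ne : Cin ≠ ⊤ := by
      rw [hCin]
      apply ENNReal.add_ne_top.2
      constructor
      · exact (ENNReal.div_lt_top (ENNReal.mul_ne_top ENNReal.ofReal_ne_top hμB_ne)
          hμBA_pos.ne').ne
      · exact ENNReal.mul_ne_top ENNReal.ofReal_ne_top hμB_ne
    have hinner : ∀ x : X, ∫⁻ y, ENNReal.ofReal (norm (Kh (x, y))) ∂ν₂ ≤ Cin := by
      intro x
      by_cases hx : x ∈ B'
      · have hpt : ∀ y ∈ B, ENNReal.ofReal (norm (Kh (x, y)))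
            ≤ ENNReal.ofReal (norm (Kh (x, y) - K₀)) + ENNReal.ofReal (norm K₀) := by
          intro y hy
          rw [← ENNReal.ofReal_add (norm_nonneg _) (norm_nonneg _)]
          apply ENNReal.ofReal_le_ofReal
          calc norm (Kh (x, y)) = norm ((Kh (x, y) - K₀) + K₀) := by ring_nf
            _ ≤ norm (Kh (x, y) - K₀) + norm K₀ := norm_add_le _ _
        calc ∫⁻ y, ENNReal.ofReal (norm (Kh (x, y))) ∂ν₂
            ≤ ∫⁻ y, (ENNReal.ofReal (norm (Kh (x, y) - K₀))
                + ENNReal.ofReal (norm K₀)) ∂ν₂ := by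
              apply MeasureTheory.lintegral_mono_ae
              exact (MeasureTheory.ae_restrict_iff' hmB).2 (MeasureTheory.ae_of_all _ hpt)
          _ = (∫⁻ y, ENNReal.ofReal (norm (Kh (x, y) - K₀)) ∂ν₂)
              + ∫⁻ _y, ENNReal.ofReal (norm K₀) ∂ν₂ :=
              MeasureTheory.lintegral_add_right _ measurable_const
          _ ≤ ENNReal.ofReal (ξ * ε) * μ B / μ (qball d y₀ (A * r))
              + ENNReal.ofReal (norm K₀) * μ B := by
              apply add_le_add
              · have hcong : ∫⁻ y, ENNReal.ofReal (norm (Kh (x, y) - K₀)) ∂ν₂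
                    = ∫⁻ y in B, ENNReal.ofReal (norm (K x y - K x₀ y₀)) ∂μ := by
                  apply MeasureTheory.setLIntegral_congr_fun hmB
                  intro y hy
                  have hKv : Kh (x, y) = K x y := by rw [hKh_def]; exact if_pos ⟨hx, hy⟩
                  dsimp only; rw [hKv, hK₀_def]
                rw [hcong]
                exact hadm.int_y x hx
              · rw [MeasureTheory.lintegral_const, MeasureTheory.Measure.restrict_apply_univ]
          _ = Cin := hCin.symm
      · have hz : ∀ y, Kh (x, y) = 0 := fun y => by
          rw [hKh_def]; exact if_neg (by tauto)
        have : ∀ y, ENNReal.ofReal (norm (Kh (x, y))) = 0 := fun y => by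
          rw [hz y, norm_zero, ENNReal.ofReal_zero]
        simp only [this, MeasureTheory.lintegral_zero]
        exact zero_le
    calc ∫⁻ x, (∫⁻ y, ENNReal.ofReal (norm (Kh (x, y))) ∂ν₂) ∂ν₁
        ≤ ∫⁻ _x, Cin ∂ν₁ := MeasureTheory.lintegral_mono hinner
      _ = Cin * μ B' := by rw [MeasureTheory.lintegral_const, MeasureTheory.Measure.restrict_apply_univ]
      _ < ⊤ := ENNReal.mul_lt_top hCin_ne.lt_top (lt_top_iff_ne_top.2 hμB'_ne)
  have hGaesm : MeasureTheory.AEStronglyMeasurable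
      (fun q : X × X => gC q.1 * (Kh q * h q.2)) (ν₁.prod ν₂) :=
    ((hgCm.comp measurable_fst).stronglyMeasurable.aestronglyMeasurable).mul hKh_snd_aesm
  have hGint : MeasureTheory.Integrable
      (fun q : X × X => gC q.1 * (Kh q * h q.2)) (ν₁.prod ν₂) := by
    refine ⟨hGaesm, ?_⟩
    rw [MeasureTheory.hasFiniteIntegral_iff_norm]
    have hpt : ∀ q : X × X, ENNReal.ofReal ‖gC q.1 * (Kh q * h q.2)‖
        ≤ ENNReal.ofReal (Ng * (Mf / δ)) * ENNReal.ofReal (norm (Kh q)) := by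
      intro q
      rw [← ENNReal.ofReal_mul (mul_nonneg hNg0 (div_nonneg hMf0 hδ.le))]
      apply ENNReal.ofReal_le_ofReal
      rw [norm_mul, norm_mul]
      calc ‖gC q.1‖ * (‖Kh q‖ * ‖h q.2‖)
          ≤ Ng * (‖Kh q‖ * (Mf / δ)) := by
            apply mul_le_mul (by exact hgCbd _) _
              (mul_nonneg (norm_nonneg _) (norm_nonneg _)) hNg0
            exact mul_le_mul_of_nonneg_left (by exact hhbd _)
              (norm_nonneg _)
        _ = Ng * (Mf / δ) * norm (Kh q) := by ring
    calc ∫⁻ q, ENNReal.ofReal ‖gC q.1 * (Kh q * h q.2)‖ ∂(ν₁.prod ν₂)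
        ≤ ∫⁻ q, ENNReal.ofReal (Ng * (Mf / δ)) * ENNReal.ofReal (norm (Kh q))
            ∂(ν₁.prod ν₂) := MeasureTheory.lintegral_mono hpt
      _ = ENNReal.ofReal (Ng * (Mf / δ))
          * ∫⁻ q, ENNReal.ofReal (norm (Kh q)) ∂(ν₁.prod ν₂) :=
          MeasureTheory.lintegral_const_mul' _ _ ENNReal.ofReal_ne_top
      _ < ⊤ := ENNReal.mul_lt_top (lt_top_iff_ne_top.2 ENNReal.ofReal_ne_top) hKh_lint
  have hswap : ∫ x, ∫ y, gC x * (Kh (x, y) * h y) ∂ν₂ ∂ν₁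
      = ∫ y, ∫ x, gC x * (Kh (x, y) * h y) ∂ν₁ ∂ν₂ :=
    MeasureTheory.integral_integral_swap hGint
  have hIB_f : ∫ y, f y ∂ν₂ = 0 := by
    have hind : B.indicator f = f := by
      rw [Set.indicator_eq_self]
      intro y hy
      by_contra hyB
      exact hy (hfvan y hyB)
    have h1 : ∫ y, f y ∂ν₂ = ∫ y, B.indicator f y ∂μ := by
      rw [MeasureTheory.integral_indicator hmB]
    rw [h1]
    have h2 : ∫ y, B.indicator f y ∂μ = ∫ y, f y ∂μ := by
      rw [hind]
    rw [h2, hfzero]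
  have hLHS : ∫ x, ∫ y, gC x * (Kh (x, y) * h y) ∂ν₂ ∂ν₁ = ∫ x, gC x * Φ x ∂ν₁ := by
    apply MeasureTheory.integral_congr_ae
    apply MeasureTheory.ae_of_all
    intro x
    show ∫ y, gC x * (Kh (x, y) * h y) ∂ν₂ = gC x * Φ x
    rw [MeasureTheory.integral_const_mul]
  have hRHS : ∫ y, ∫ x, gC x * (Kh (x, y) * h y) ∂ν₁ ∂ν₂ = 0 := by
    have hinner : ∀ y ∈ B, ∫ x, gC x * (Kh (x, y) * h y) ∂ν₁ = -f y := by
      intro y hy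
      have h1 : ∫ x, gC x * (Kh (x, y) * h y) ∂ν₁ = (∫ x, gC x * Kh (x, y) ∂ν₁) * h y := by
        rw [← MeasureTheory.integral_mul_const]
        congr 1; funext x; ring
      rw [h1]
      show H y * h y = -f y
      rw [hhval y hy, mul_comm, div_mul_cancel₀ _ (hHne y hy)]
    calc ∫ y, ∫ x, gC x * (Kh (x, y) * h y) ∂ν₁ ∂ν₂ = ∫ y, -f y ∂ν₂ :=
        MeasureTheory.setIntegral_congr_fun hmB hinner
      _ = -∫ y, f y ∂ν₂ := MeasureTheory.integral_neg f
      _ = 0 := by rw [hIB_f, neg_zero]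
  have hkey0 : ∫ x, gC x * Φ x ∂ν₁ = 0 := by rw [← hLHS, hswap, hRHS]
  
  set ft : X → ℂ := Set.indicator B' (fun x => -(gC x * Φ x)) with hft_def
  have hK₀I_ne : K₀ * (I : ℂ) ≠ 0 := by
    intro h0
    rw [h0, norm_zero] at h2δ
    linarith
  set Jh : ℂ := ∫ y, h y ∂ν₂ with hJh_def
  have hwint : MeasureTheory.Integrable (fun y => -f y * (K₀ * (I : ℂ))⁻¹) ν₂ :=
    (hfint.restrict.neg.mul_const _)
  have hwzero : ∫ y, -f y * (K₀ * (I : ℂ))⁻¹ ∂ν₂ = 0 := by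
    rw [MeasureTheory.integral_mul_const, MeasureTheory.integral_neg, hIB_f, neg_zero, zero_mul]
  have hJh_bd : norm Jh ≤ Mf * (Er / (2 * δ ^ 2)) * bV := by
    have hJeq : Jh = ∫ y, (h y - -f y * (K₀ * (I : ℂ))⁻¹) ∂ν₂ := by
      rw [MeasureTheory.integral_sub hhint2 hwint, hwzero, sub_zero]
    have hptbd : ∀ y ∈ B, ‖h y - -f y * (K₀ * (I : ℂ))⁻¹‖ ≤ Mf * (Er / (2 * δ ^ 2)) := by
      intro y hy
      have h2 : h y - -f y * (K₀ * (I : ℂ))⁻¹ = -f y * ((H y)⁻¹ - (K₀ * (I : ℂ))⁻¹) := by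
        rw [hhval y hy, div_eq_mul_inv]; ring
      rw [h2, norm_mul, norm_neg]
      have h3 : (H y)⁻¹ - (K₀ * (I : ℂ))⁻¹ = (K₀ * (I : ℂ) - H y) / (H y * (K₀ * (I : ℂ))) :=
        inv_sub_inv (hHne y hy) hK₀I_ne
      rw [h3, norm_div, norm_mul]
      have hnum : ‖K₀ * (I : ℂ) - H y‖ ≤ Er := by
        rw [← norm_neg]
        simp only [neg_sub]
        exact hH_err y hy
      have hden : 2 * δ ^ 2 ≤ ‖H y‖ * ‖K₀ * (I : ℂ)‖ := by
        have ha1 : δ ≤ ‖H y‖ := by exact hHlb y hy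
        have ha2 : 2 * δ ≤ ‖K₀ * (I : ℂ)‖ := by exact h2δ
        nlinarith
      apply mul_le_mul (by exact hfbd y)
        (div_le_div₀ hEr0 hnum (by positivity) hden)
        (div_nonneg (norm_nonneg _) (mul_nonneg (norm_nonneg _) (norm_nonneg _))) hMf0
    calc norm Jh
        = ‖∫ y, (h y - -f y * (K₀ * (I : ℂ))⁻¹) ∂ν₂‖ := by
          rw [hJeq]
      _ ≤ Mf * (Er / (2 * δ ^ 2)) * (μ B).toReal := by
          apply MeasureTheory.norm_setIntegral_le_of_norm_le_const
            (lt_top_iff_ne_top.2 hμB_ne) hptbd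
      _ = Mf * (Er / (2 * δ ^ 2)) * bV := rfl
  set Φ₀ : ℝ := ξ * ε * bV / a * (Mf / δ) + ξ / a * (Mf * (Er / (2 * δ ^ 2)) * bV)
    with hΦ₀_def
  have hΦ₀0 : 0 ≤ Φ₀ := by
    rw [hΦ₀_def, hEr_def]
    positivity
  have hΦbd : ∀ x ∈ B', norm (Φ x) ≤ Φ₀ := by
    intro x hx
    have hsec := hint_y x hx
    have hKhh_int : MeasureTheory.Integrable (fun y => (Kh (x, y) - K₀) * h y) ν₂ := by
      have h1 : MeasureTheory.Integrable (fun y => h y * (Kh (x, y) - K₀)) ν₂ :=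
        MeasureTheory.Integrable.bdd_mul hsec.1 hhaesm.restrict
          (MeasureTheory.ae_of_all _ fun y => hhbd y)
      have h2 : (fun y => (Kh (x, y) - K₀) * h y) = fun y => h y * (Kh (x, y) - K₀) :=
        funext fun y => mul_comm _ _
      rw [h2]; exact h1
    have hΦsplit : Φ x = (∫ y, (Kh (x, y) - K₀) * h y ∂ν₂) + K₀ * Jh := by
      have heq : ∫ y, Kh (x, y) * h y ∂ν₂
          = ∫ y, ((Kh (x, y) - K₀) * h y + K₀ * h y) ∂ν₂ := by
        congr 1; funext y; ring
      show ∫ y, Kh (x, y) * h y ∂ν₂ = _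
      rw [heq, MeasureTheory.integral_add hKhh_int (hhint2.const_mul K₀),
        MeasureTheory.integral_const_mul]
    have hnormint : MeasureTheory.Integrable
        (fun y => norm (Kh (x, y) - K₀) * (Mf / δ)) ν₂ := by
      have := hsec.1.norm.mul_const (Mf / δ)
      exact this
    have hterm1 : ‖∫ y, (Kh (x, y) - K₀) * h y ∂ν₂‖ ≤ ξ * ε * bV / a * (Mf / δ) := by
      calc ‖∫ y, (Kh (x, y) - K₀) * h y ∂ν₂‖
          ≤ ∫ y, ‖(Kh (x, y) - K₀) * h y‖ ∂ν₂ := MeasureTheory.norm_integral_le_integral_norm _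
        _ ≤ ∫ y, norm (Kh (x, y) - K₀) * (Mf / δ) ∂ν₂ := by
            apply MeasureTheory.integral_mono hKhh_int.norm hnormint
            intro y
            show ‖(Kh (x, y) - K₀) * h y‖ ≤ norm (Kh (x, y) - K₀) * (Mf / δ)
            rw [norm_mul]
            exact mul_le_mul_of_nonneg_left (by exact hhbd y)
              (norm_nonneg _)
        _ = (∫ y, norm (Kh (x, y) - K₀) ∂ν₂) * (Mf / δ) :=
            MeasureTheory.integral_mul_const _ _
        _ ≤ ξ * ε * bV / a * (Mf / δ) :=
            mul_le_mul_of_nonneg_right hsec.2 (div_nonneg hMf0 hδ.le)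
    have hterm2 : norm (K₀ * Jh) ≤ ξ / a * (Mf * (Er / (2 * δ ^ 2)) * bV) := by
      rw [norm_mul]
      apply mul_le_mul hK₀ub hJh_bd (norm_nonneg _) (by positivity)
    calc norm (Φ x)
        ≤ ‖∫ y, (Kh (x, y) - K₀) * h y ∂ν₂‖ + norm (K₀ * Jh) := by
          rw [hΦsplit]
          calc ‖(∫ y, (Kh (x, y) - K₀) * h y ∂ν₂) + K₀ * Jh‖
              ≤ ‖∫ y, (Kh (x, y) - K₀) * h y ∂ν₂‖ + ‖K₀ * Jh‖ := norm_add_le _ _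
            _ = _ := rfl
      _ ≤ Φ₀ := by rw [hΦ₀_def]; exact add_le_add hterm1 hterm2
  have hTs_eq : ∀ y ∈ B, Ts gC y = H y := by
    intro y hy
    have hns : y ∉ qsupp d gC :=
      aux_not_mem_qsupp hX (S := B') hgC_supp hr (fun w hw => hadm.sep y hy w hw)
    rw [hTs gC hgCmem y hns]
    have h1 : (fun x => (fun x y => K y x) y x * gC x)
        = B'.indicator (fun x => gC x * Kh (x, y)) := by
      funext x
      rw [Set.indicator_apply]
      by_cases hx : x ∈ B'
      · rw [if_pos hx]
        have hKv : Kh (x, y) = K x y := by rw [hKh_def]; exact if_pos ⟨hx, hy⟩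
        rw [hKv]
        ring
      · rw [if_neg hx]
        have hg : gC x = 0 := by
          by_contra hne; exact hx (hgC_supp x hne)
        show K x y * gC x = 0
        rw [hg, mul_zero]
    rw [h1, MeasureTheory.integral_indicator hmB']
  have hT_eq : ∀ x ∈ B', T h x = Φ x := by
    intro x hx
    have hns : x ∉ qsupp d h := by
      apply aux_not_mem_qsupp hX (S := B) (fun z hz => ?_) hr (fun w hw => hsep' x hx w hw)
      by_contra hzB
      exact hz (hhval0 z hzB)
    rw [hT h hhmem x hns]
    have h1 : (fun y => K x y * h y) = B.indicator (fun y => Kh (x, y) * h y) := by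
      funext y
      rw [Set.indicator_apply]
      by_cases hy : y ∈ B
      · rw [if_pos hy]
        have hKv : Kh (x, y) = K x y := by rw [hKh_def]; exact if_pos ⟨hx, hy⟩
        rw [hKv]
      · rw [if_neg hy, hhval0 y hy, mul_zero]
    rw [h1, MeasureTheory.integral_indicator hmB]
  refine ⟨h, ft, ?_, ?_, ?_, ?_, ?_⟩
  · -- the decomposition identity
    intro x
    by_cases hx' : x ∈ B'
    · have hxB : x ∉ B := fun hxB => hdisjBB' x hxB hx'
      have hfx : f x = 0 := hfvan x hxB
      have hhx : h x = 0 := hhval0 x hxB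
      have hftx : ft x = -(gC x * Φ x) := Set.indicator_of_mem hx' _
      rw [hT_eq x hx', hfx, hhx, hftx]
      show (0 : ℂ) = gC x * Φ x - 0 * Ts gC x + -(gC x * Φ x)
      ring
    · by_cases hxB : x ∈ B
      · have hftx : ft x = 0 := Set.indicator_of_notMem hx' _
        have hgx : g x = 0 := hgsupp x hx'
        rw [hTs_eq x hxB, hftx, hhval x hxB]
        show f x = ((g x : ℝ) : ℂ) * T h x - -f x / H x * H x + 0
        rw [hgx, div_mul_cancel₀ _ (hHne x hxB)]
        push_cast
        ring
      · have hftx : ft x = 0 := Set.indicator_of_notMem hx' _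
        have hgx : g x = 0 := hgsupp x hx'
        have hhx : h x = 0 := hhval0 x hxB
        have hfx : f x = 0 := hfvan x hxB
        rw [hftx, hhx, hfx]
        show (0 : ℂ) = ((g x : ℝ) : ℂ) * T h x - 0 * Ts gC x + 0
        rw [hgx]
        push_cast
        ring
  · -- MemLinfty0 ft
    refine ⟨⟨⟨Ng * Φ₀, ?_⟩, ?_⟩, ?_, ?_⟩
    · intro x
      by_cases hx : x ∈ B'
      · rw [hft_def]
        show norm (Set.indicator B' (fun x => -(gC x * Φ x)) x) ≤ Ng * Φ₀
        rw [Set.indicator_of_mem hx, norm_neg, norm_mul]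
        exact mul_le_mul (hgCbd x) (hΦbd x hx) (norm_nonneg _) hNg0
      · rw [hft_def]
        show norm (Set.indicator B' (fun x => -(gC x * Φ x)) x) ≤ Ng * Φ₀
        rw [Set.indicator_of_notMem hx, norm_zero]
        exact mul_nonneg hNg0 hΦ₀0
    · intro x hx
      by_cases hx' : x ∈ B'
      · have hgx : g x = 0 := by
          by_contra hgx
          exact hx ⟨hx', hgx⟩
        show Set.indicator B' (fun x => -(gC x * Φ x)) x = 0
        rw [Set.indicator_of_mem hx']
        show -(((g x : ℝ) : ℂ) * Φ x) = 0
        rw [hgx]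
        norm_num
      · exact Set.indicator_of_notMem hx' _
    · -- Integrable ft
      rw [hft_def]
      apply (integrable_indicator_iff hmB').2
      apply MeasureTheory.Integrable.mono' (MeasureTheory.integrable_const (Ng * Φ₀))
      · exact ((hgCm.stronglyMeasurable.aestronglyMeasurable.restrict).mul hΦaesm).neg
      · apply (MeasureTheory.ae_restrict_iff' hmB').2
        apply MeasureTheory.ae_of_all
        intro x hx
        rw [norm_neg, norm_mul]
        exact mul_le_mul (hgCbd x) (hΦbd x hx) (norm_nonneg _) hNg0
    · -- integral zero
      rw [hft_def, MeasureTheory.integral_indicator hmB']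
      have h1 : ∫ x in B', -(gC x * Φ x) ∂μ = -∫ x, gC x * Φ x ∂ν₁ :=
        MeasureTheory.integral_neg _
      rw [h1, hkey0, neg_zero]
  · -- MemLinfty h
    exact ⟨⟨Mf / δ, hhbd⟩, hhvan⟩
  · -- the h bound
    have hsup_h : supNorm h ≤ Mf / δ := ciSup_le hhbd
    calc Ng * supNorm h ≤ Ng * (Mf / δ) := mul_le_mul_of_nonneg_left hsup_h hNg0
      _ = 2 * c * ξ * (a / b') * Mf := by
          rw [hδ_def]; field_simp
      _ ≤ 4 * c ^ 2 * ξ ^ 4 * (a / b') * Mf := by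
          apply mul_le_mul_of_nonneg_right _ hMf0
          apply mul_le_mul_of_nonneg_right _ (div_nonneg ha.le hb'.le)
          have e1 : (1 : ℝ) ≤ ξ ^ 3 := by nlinarith [sq_nonneg (ξ - 1), sq_nonneg ξ]
          have e2 : (1 : ℝ) ≤ 2 * c * ξ ^ 3 := by nlinarith
          calc 2 * c * ξ = 2 * c * ξ * 1 := by ring
            _ ≤ 2 * c * ξ * (2 * c * ξ ^ 3) :=
                mul_le_mul_of_nonneg_left e2 (by positivity)
            _ = 4 * c ^ 2 * ξ ^ 4 := by ring
  · -- the ft bound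
    apply ciSup_le
    intro x
    by_cases hx : x ∈ B'
    · have h1 : norm (ft x) ≤ Ng * Φ₀ := by
        rw [hft_def]
        show norm (Set.indicator B' (fun x => -(gC x * Φ x)) x) ≤ Ng * Φ₀
        rw [Set.indicator_of_mem hx, norm_neg, norm_mul]
        exact mul_le_mul (hgCbd x) (hΦbd x hx) (norm_nonneg _) hNg0
      refine h1.trans ?_
      have hid : Ng * Φ₀ = (2 * c * ξ ^ 2 + 2 * c ^ 2 * ξ ^ 4) * ε * (bV / b') * Mf := by
        rw [hΦ₀_def, hEr_def, hδ_def]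
        field_simp
      rw [hid]
      apply mul_le_mul_of_nonneg_right _ hMf0
      apply mul_le_mul_of_nonneg_right _ (div_nonneg hbV.le hb'.le)
      apply mul_le_mul_of_nonneg_right _ hε0.le
      have e1 : (1 : ℝ) ≤ ξ ^ 2 := by nlinarith
      have e2 : (1 : ℝ) ≤ c * ξ ^ 2 := by nlinarith
      have e3 : 2 * c * ξ ^ 2 ≤ 2 * c ^ 2 * ξ ^ 4 := by
        calc 2 * c * ξ ^ 2 = 2 * c * ξ ^ 2 * 1 := by ring
          _ ≤ 2 * c * ξ ^ 2 * (c * ξ ^ 2) :=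
              mul_le_mul_of_nonneg_left e2 (by positivity)
          _ = 2 * c ^ 2 * ξ ^ 4 := by ring
      linarith
    · have h1 : norm (ft x) = 0 := by
        rw [hft_def]
        show norm (Set.indicator B' (fun x => -(gC x * Φ x)) x) = 0
        rw [Set.indicator_of_notMem hx, norm_zero]
      rw [h1]
      have hpos : (0:ℝ) ≤ 4 * c ^ 2 * ξ ^ 4 * ε * (bV / b') * Mf := by
        apply mul_nonneg _ hMf0
        apply mul_nonneg _ (div_nonneg hbV.le hb'.le)
        apply mul_nonneg _ hε0.le
        positivity
      exact hpos
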